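/- (Bivector normal form of a Lagrangian subspace) Let V be a finite-dimensional real vector space and L ⊆ 𝕋V = V × V* a Lagrangian subspace with respect to the pairing ⟨(u,ξ),(v,η)⟩ = ξ(v) + η(u), and let K := {v ∈ V : (v,0) ∈ L}. Then there exists a skew-symmetric linear map π : V* → V (i.e., η(π(ξ)) = −ξ(π(η)) for all ξ,η ∈ V*) such that L = {(v + π(ξ), ξ) : v ∈ K, ξ ∈ ann(K)}, where ann(K) := {ξ ∈ V* : ξ vanishes on K}. -/

import Mathlib

open Module

variable {V W : Type*} [AddCommGroup V] [Module ℝ V] [AddCommGroup W] [Module ℝ W]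

/-- The canonical symmetric pairing on the generalized tangent space `𝕋V = V × V*`:
`⟨(u,ξ),(v,η)⟩ = ξ(v) + η(u)`. -/
noncomputable def gpair : (V × Module.Dual ℝ V) →ₗ[ℝ] (V × Module.Dual ℝ V) →ₗ[ℝ] ℝ :=
  LinearMap.mk₂ ℝ (fun a b => a.2 b.1 + b.2 a.1)
    (fun a a' b => by
      simp only [Prod.fst_add, Prod.snd_add, LinearMap.add_apply, map_add]; ring)
    (fun r a b => by
      simp only [Prod.smul_fst, Prod.smul_snd, LinearMap.smul_apply, map_smul,
        smul_eq_mul]; ring)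
    (fun a b b' => by
      simp only [Prod.fst_add, Prod.snd_add, LinearMap.add_apply, map_add]; ring)
    (fun r a b => by
      simp only [Prod.smul_fst, Prod.smul_snd, LinearMap.smul_apply, map_smul,
        smul_eq_mul]; ring)

/-- Orthogonal complement with respect to the canonical pairing on `𝕋V`. -/
noncomputable def gperp (S : Submodule ℝ (V × Module.Dual ℝ V)) :
    Submodule ℝ (V × Module.Dual ℝ V) where
  carrier := {a | ∀ b ∈ S, gpair a b = 0}
  add_mem' := by
    intro a b ha hb c hc
    rw [map_add, LinearMap.add_apply, ha c hc, hb c hc, add_zero]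
  zero_mem' := by
    intro c hc
    rw [map_zero, LinearMap.zero_apply]
  smul_mem' := by
    intro r a ha c hc
    rw [map_smul, LinearMap.smul_apply, ha c hc, smul_zero]

/-- A subspace of `𝕋V` is Lagrangian if it equals its own orthogonal complement. -/
def IsLagrangian (L : Submodule ℝ (V × Module.Dual ℝ V)) : Prop :=
  gperp L = L

/-- A linear map `π : V* → V` is skew-symmetric. -/
def IsSkew (π : Module.Dual ℝ V →ₗ[ℝ] V) : Prop :=
  ∀ ξ η : Module.Dual ℝ V, η (π ξ) = -(ξ (π η))

/-- The tangent product `L ⋆ R = {(u, ξ+η) : (u,ξ) ∈ L, (u,η) ∈ R}`. -/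
def tanProd (L R : Submodule ℝ (V × Module.Dual ℝ V)) :
    Submodule ℝ (V × Module.Dual ℝ V) where
  carrier := {a | ∃ ξ η : Module.Dual ℝ V, (a.1, ξ) ∈ L ∧ (a.1, η) ∈ R ∧ a.2 = ξ + η}
  add_mem' := by
    rintro a b ⟨ξ, η, h1, h2, h3⟩ ⟨ξ', η', h1', h2', h3'⟩
    refine ⟨ξ + ξ', η + η', ?_, ?_, ?_⟩
    · simpa [Prod.fst_add] using L.add_mem h1 h1'
    · simpa [Prod.fst_add] using R.add_mem h2 h2'
    · simp only [Prod.snd_add, h3, h3']; abel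
  zero_mem' := ⟨0, 0, by simpa using (show ((0 : _), (0 : _)) ∈ L from L.zero_mem), by simpa using (show ((0 : _), (0 : _)) ∈ R from R.zero_mem), by simp⟩
  smul_mem' := by
    rintro r a ⟨ξ, η, h1, h2, h3⟩
    refine ⟨r • ξ, r • η, ?_, ?_, ?_⟩
    · simpa [Prod.smul_fst] using L.smul_mem r h1
    · simpa [Prod.smul_fst] using R.smul_mem r h2
    · simp only [Prod.smul_snd, h3, smul_add]

/-- The cotangent product `L ⊛ R = {(u+v, ξ) : (u,ξ) ∈ L, (v,ξ) ∈ R}`. -/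
def cotProd (L R : Submodule ℝ (V × Module.Dual ℝ V)) :
    Submodule ℝ (V × Module.Dual ℝ V) where
  carrier := {a | ∃ u v : V, (u, a.2) ∈ L ∧ (v, a.2) ∈ R ∧ a.1 = u + v}
  add_mem' := by
    rintro a b ⟨u, v, h1, h2, h3⟩ ⟨u', v', h1', h2', h3'⟩
    refine ⟨u + u', v + v', ?_, ?_, ?_⟩
    · simpa [Prod.snd_add] using L.add_mem h1 h1'
    · simpa [Prod.snd_add] using R.add_mem h2 h2'
    · simp only [Prod.fst_add, h3, h3']; abel
  zero_mem' := ⟨0, 0, by simpa using (show ((0 : _), (0 : _)) ∈ L from L.zero_mem), by simpa using (show ((0 : _), (0 : _)) ∈ R from R.zero_mem), by simp⟩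
  smul_mem' := by
    rintro r a ⟨u, v, h1, h2, h3⟩
    refine ⟨r • u, r • v, ?_, ?_, ?_⟩
    · simpa [Prod.smul_snd] using L.smul_mem r h1
    · simpa [Prod.smul_snd] using R.smul_mem r h2
    · simp only [Prod.smul_fst, h3, smul_add]

/-- The backward image `φ^!(L) = {(u, η ∘ φ) : (φ(u), η) ∈ L}`. -/
def back (φ : V →ₗ[ℝ] W) (L : Submodule ℝ (W × Module.Dual ℝ W)) :
    Submodule ℝ (V × Module.Dual ℝ V) where
  carrier := {a | ∃ η : Module.Dual ℝ W, (φ a.1, η) ∈ L ∧ a.2 = η.comp φ}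
  add_mem' := by
    rintro a b ⟨η, h1, h2⟩ ⟨η', h1', h2'⟩
    refine ⟨η + η', ?_, ?_⟩
    · simpa [Prod.fst_add, map_add] using L.add_mem h1 h1'
    · simp only [Prod.snd_add, h2, h2', LinearMap.add_comp]
  zero_mem' := ⟨0, by simpa using (show ((0 : _), (0 : _)) ∈ L from L.zero_mem), by simp⟩
  smul_mem' := by
    rintro r a ⟨η, h1, h2⟩
    refine ⟨r • η, ?_, ?_⟩
    · simpa [Prod.smul_fst, map_smul] using L.smul_mem r h1
    · simp only [Prod.smul_snd, h2, LinearMap.smul_comp]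

/-- The forward image `φ_!(L) = {(φ(u), η) : (u, η ∘ φ) ∈ L}`. -/
def fwd (φ : V →ₗ[ℝ] W) (L : Submodule ℝ (V × Module.Dual ℝ V)) :
    Submodule ℝ (W × Module.Dual ℝ W) where
  carrier := {b | ∃ u : V, φ u = b.1 ∧ (u, b.2.comp φ) ∈ L}
  add_mem' := by
    rintro a b ⟨u, h1, h2⟩ ⟨u', h1', h2'⟩
    refine ⟨u + u', ?_, ?_⟩
    · simp only [map_add, h1, h1', Prod.fst_add]
    · have := L.add_mem h2 h2'
      simpa [Prod.snd_add, LinearMap.add_comp] using this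
  zero_mem' := ⟨0, by simp, by simpa using (show ((0 : _), (0 : _)) ∈ L from L.zero_mem)⟩
  smul_mem' := by
    rintro r a ⟨u, h1, h2⟩
    refine ⟨r • u, ?_, ?_⟩
    · simp only [map_smul, h1, Prod.smul_fst]
    · have := L.smul_mem r h2
      simpa [Prod.smul_snd, LinearMap.smul_comp] using this

/-- The graph `Gr(π) = {(π(ξ), ξ) : ξ ∈ V*}` of a map `π : V* → V`. -/
def gr (π : Module.Dual ℝ V →ₗ[ℝ] V) : Submodule ℝ (V × Module.Dual ℝ V) where
  carrier := {a | π a.2 = a.1}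
  add_mem' := by
    intro a b ha hb
    simp only [Set.mem_setOf_eq, Prod.fst_add, Prod.snd_add, map_add] at *
    rw [ha, hb]
  zero_mem' := by simp
  smul_mem' := by
    intro r a ha
    simp only [Set.mem_setOf_eq, Prod.smul_fst, Prod.smul_snd, map_smul] at *
    rw [ha]

theorem stmt13 [FiniteDimensional ℝ V]
    (L : Submodule ℝ (V × Module.Dual ℝ V)) (hL : IsLagrangian L) :
    ∃ π : Module.Dual ℝ V →ₗ[ℝ] V, IsSkew π ∧
      (L : Set (V × Module.Dual ℝ V)) =
        {a | ∃ v ∈ L.comap (LinearMap.inl ℝ V (Module.Dual ℝ V)),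
             ∃ ξ ∈ (L.comap (LinearMap.inl ℝ V (Module.Dual ℝ V))).dualAnnihilator,
             a = (v + π ξ, ξ)} := by
  classical
  set K := L.comap (LinearMap.inl ℝ V (Module.Dual ℝ V)) with hKdef
  have hKmem : ∀ v : V, v ∈ K ↔ (v, (0 : Module.Dual ℝ V)) ∈ L := by
    intro v; rfl
  -- orthogonality within L
  have horth : ∀ a ∈ L, ∀ b ∈ L, a.2 b.1 + b.2 a.1 = 0 := by
    intro a ha b hb
    rw [← hL] at ha
    have := ha b hb
    simpa [gpair] using this
  -- the projection of L to the second factor equals the annihilator of K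
  have hΛ : L.map (LinearMap.snd ℝ V (Module.Dual ℝ V)) = K.dualAnnihilator := by
    have hco : (L.map (LinearMap.snd ℝ V (Module.Dual ℝ V))).dualCoannihilator = K := by
      ext v
      simp only [Submodule.mem_dualCoannihilator]
      constructor
      · intro h
        rw [hKmem]
        rw [← hL]
        intro b hb
        have h2 := h b.2 (Submodule.mem_map_of_mem hb)
        simp [gpair, h2]
      · intro hv ξ hξ
        obtain ⟨b, hb, rfl⟩ := hξ
        have := horth b hb (v, 0) ((hKmem v).1 hv)
        simpa using this
    rw [← hco, Subspace.dualCoannihilator_dualAnnihilator_eq]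
  -- a section of the projection L → ann(K)
  have hsec : ∃ g : (K.dualAnnihilator : Submodule ℝ (Module.Dual ℝ V)) →ₗ[ℝ]
      (V × Module.Dual ℝ V), ∀ ξ : K.dualAnnihilator, g ξ ∈ L ∧ (g ξ).2 = (ξ : Module.Dual ℝ V) := by
    let f : L →ₗ[ℝ] (K.dualAnnihilator : Submodule ℝ (Module.Dual ℝ V)) :=
      LinearMap.codRestrict _ ((LinearMap.snd ℝ V (Module.Dual ℝ V)).comp L.subtype)
        (fun a => by
          rw [← hΛ]; exact Submodule.mem_map_of_mem a.2)
    have hfsurj : LinearMap.range f = ⊤ := by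
      rw [LinearMap.range_eq_top]
      rintro ⟨ξ, hξ⟩
      rw [← hΛ] at hξ
      obtain ⟨b, hb, hb2⟩ := hξ
      exact ⟨⟨b, hb⟩, Subtype.ext hb2⟩
    haveI : Module.Free ℝ (K.dualAnnihilator : Submodule ℝ (Module.Dual ℝ V)) :=
      Module.Free.of_divisionRing ℝ ↥(K.dualAnnihilator : Submodule ℝ (Module.Dual ℝ V))
    obtain ⟨g, hg⟩ := f.exists_rightInverse_of_surjective hfsurj
    refine ⟨L.subtype.comp g, fun ξ => ⟨(g ξ).2, ?_⟩⟩
    have := congrArg (Subtype.val) (LinearMap.congr_fun hg ξ)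
    simpa [f] using this
  obtain ⟨g, hg⟩ := hsec
  -- a complement W of K in V
  obtain ⟨W, hW⟩ := Submodule.exists_isCompl K
  let q : V →ₗ[ℝ] V := W.subtype.comp (W.linearProjOfIsCompl K hW.symm)
  have hqW : ∀ v : V, q v ∈ W := fun v => (W.linearProjOfIsCompl K hW.symm v).2
  have hqK : ∀ v : V, v - q v ∈ K := by
    intro v
    have h := Submodule.projection_add_projection_eq_self hW.symm v
    have : v - q v = (K.linearProjOfIsCompl W hW v : V) := by
      rw [sub_eq_iff_eq_add, add_comm]
      exact h.symm
    rw [this]; exact (K.linearProjOfIsCompl W hW v).2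
  -- the W-valued section s
  let s : (K.dualAnnihilator : Submodule ℝ (Module.Dual ℝ V)) →ₗ[ℝ] V :=
    q.comp ((LinearMap.fst ℝ V (Module.Dual ℝ V)).comp g)
  have hsW : ∀ ξ, s ξ ∈ W := fun ξ => hqW _
  have hsL : ∀ ξ : K.dualAnnihilator, ((s ξ, (ξ : Module.Dual ℝ V)) : V × Module.Dual ℝ V) ∈ L := by
    intro ξ
    have h1 : g ξ ∈ L := (hg ξ).1
    have hk : ((g ξ).1 - q (g ξ).1, (0 : Module.Dual ℝ V)) ∈ L :=
      (hKmem _).1 (hqK (g ξ).1)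
    have := L.sub_mem h1 hk
    have heq : g ξ - ((g ξ).1 - q (g ξ).1, (0 : Module.Dual ℝ V))
        = ((s ξ, (ξ : Module.Dual ℝ V)) : V × Module.Dual ℝ V) := by
      ext
      · simp [s]
      · simp [(hg ξ).2]
    rwa [heq] at this
  -- skew-symmetry on ann(K)
  have hskew0 : ∀ α β : K.dualAnnihilator, (β : Module.Dual ℝ V) (s α)
      = -((α : Module.Dual ℝ V) (s β)) := by
    intro α β
    have := horth _ (hsL α) _ (hsL β)
    simp only at this
    linarith
  -- projection onto ann(K) along ann(W)
  have hcomp : IsCompl K.dualAnnihilator W.dualAnnihilator :=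
    Subspace.isCompl_dualAnnihilator hW
  let P : Module.Dual ℝ V →ₗ[ℝ] (K.dualAnnihilator : Submodule ℝ (Module.Dual ℝ V)) :=
    K.dualAnnihilator.linearProjOfIsCompl W.dualAnnihilator hcomp
  have hPleft : ∀ (ξ : Module.Dual ℝ V) (h : ξ ∈ K.dualAnnihilator), P ξ = ⟨ξ, h⟩ :=
    fun ξ h => Submodule.linearProjOfIsCompl_apply_left hcomp ⟨ξ, h⟩
  have hPW : ∀ ξ : Module.Dual ℝ V, ξ - (P ξ : Module.Dual ℝ V) ∈ W.dualAnnihilator := by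
    intro ξ
    have h := Submodule.projection_add_projection_eq_self hcomp ξ
    have : ξ - (P ξ : Module.Dual ℝ V)
        = (W.dualAnnihilator.linearProjOfIsCompl K.dualAnnihilator hcomp.symm ξ : Module.Dual ℝ V) := by
      rw [sub_eq_iff_eq_add, add_comm]
      exact h.symm
    rw [this]
    exact (W.dualAnnihilator.linearProjOfIsCompl K.dualAnnihilator hcomp.symm ξ).2
  -- the bivector
  refine ⟨s.comp P, ?_, ?_⟩
  · -- skewness
    intro ξ η
    have key : ∀ α : Module.Dual ℝ V, ∀ β : K.dualAnnihilator,
        α (s β) = (P α : Module.Dual ℝ V) (s β) := by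
      intro α β
      have h0 : (α - (P α : Module.Dual ℝ V)) (s β) = 0 := by
        have := (Submodule.mem_dualAnnihilator _).1 (hPW α)
        exact this (s β) (hsW β)
      have : α (s β) - (P α : Module.Dual ℝ V) (s β) = 0 := by
        simpa [LinearMap.sub_apply] using h0
      linarith
    simp only [LinearMap.comp_apply]
    rw [key η (P ξ), key ξ (P η)]
    exact hskew0 (P ξ) (P η)
  · -- the set equality
    ext a
    simp only [SetLike.mem_coe, Set.mem_setOf_eq]
    constructor
    · intro ha
      have hξ : a.2 ∈ K.dualAnnihilator := by
        rw [← hΛ]; exact Submodule.mem_map_of_mem ha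
      have hπ : s.comp P a.2 = s ⟨a.2, hξ⟩ := by
        simp only [LinearMap.comp_apply, hPleft a.2 hξ]
      refine ⟨a.1 - s.comp P a.2, ?_, a.2, hξ, ?_⟩
      · rw [hKmem, hπ]
        have := L.sub_mem ha (hsL ⟨a.2, hξ⟩)
        have heq : a - ((s ⟨a.2, hξ⟩, a.2) : V × Module.Dual ℝ V)
            = (a.1 - s ⟨a.2, hξ⟩, (0 : Module.Dual ℝ V)) := by
          ext <;> simp
        rwa [heq] at this
      · ext <;> simp
    · rintro ⟨v, hv, ξ, hξ, rfl⟩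
      have h1 : ((v, (0 : Module.Dual ℝ V)) : V × Module.Dual ℝ V) ∈ L := (hKmem v).1 hv
      have h2 : ((s ⟨ξ, hξ⟩, ξ) : V × Module.Dual ℝ V) ∈ L := hsL ⟨ξ, hξ⟩
      have := L.add_mem h1 h2
      have hπ : s.comp P ξ = s ⟨ξ, hξ⟩ := by
        simp only [LinearMap.comp_apply, hPleft ξ hξ]
      have heq : ((v, (0 : Module.Dual ℝ V)) : V × Module.Dual ℝ V) + (s ⟨ξ, hξ⟩, ξ)
          = (v + s.comp P ξ, ξ) := by
        rw [hπ]; ext <;> simp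
      rwa [heq] at this
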